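/- arXiv:1803.06716 — 3 statements merged into one kernel-verified Lean document; each statement's English description precedes it below -/
import Mathlib

section
/- Let q₁, q₂, q be positive integers with q → ∞ and max{q₁, q₂} = o(q²). Then the number of pairs (a,b) of integers with a ∈ [q₁, q₁+q], b ∈ [q₂, q₂+q] and gcd(a,b) = 1 equals q²(6/π² + o(1)). Equivalently, |#{(a,b) ∈ (ℤ ∩ [q₁,q₁+q]) × (ℤ ∩ [q₂,q₂+q]) : gcd(a,b)=1} / q² − 6/π²| → 0 as q → ∞ uniformly over such q₁, q₂. -/
open Finset Filter ArithmeticFunction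

lemma summable_mu : Summable (fun d : ℕ => ((moebius d : ℤ) : ℝ) / (d : ℝ) ^ 2) := by
  refine Summable.of_norm ?_
  refine Summable.of_nonneg_of_le (fun d => norm_nonneg _) (fun d => ?_)
    (Real.summable_one_div_nat_pow.mpr one_lt_two)
  rcases eq_or_ne d 0 with rfl | hd
  · simp
  · rw [norm_div, norm_pow, Real.norm_natCast]
    have h1 : ‖((moebius d : ℤ) : ℝ)‖ ≤ 1 := by
      rw [Int.norm_cast_real, Int.norm_eq_abs]
      exact_mod_cast abs_moebius_le_one
    have h2 : (0:ℝ) < (d : ℝ) ^ 2 := by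
      positivity
    gcongr

lemma tsum_mu : ∑' d : ℕ, ((moebius d : ℤ) : ℝ) / (d : ℝ) ^ 2 = 6 / Real.pi ^ 2 := by
  have hs : (1 : ℝ) < (2 : ℂ).re := by norm_num
  have hmul := ArithmeticFunction.LSeries_zeta_mul_Lseries_moebius (s := 2) hs
  rw [ArithmeticFunction.LSeries_zeta_eq_riemannZeta hs, riemannZeta_two] at hmul
  have hterm : ∀ n : ℕ, LSeries.term (fun n => ((moebius n : ℤ) : ℂ)) 2 n
      = ((((moebius n : ℤ) : ℝ) / (n : ℝ) ^ 2 : ℝ) : ℂ) := by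
    intro n
    rcases eq_or_ne n 0 with rfl | hn
    · simp [LSeries.term]
    · rw [LSeries.term_of_ne_zero hn]
      push_cast
      norm_num
  have hL : LSeries (fun n => ((moebius n : ℤ) : ℂ)) 2
      = ((∑' d : ℕ, ((moebius d : ℤ) : ℝ) / (d : ℝ) ^ 2 : ℝ) : ℂ) := by
    rw [LSeries, Complex.ofReal_tsum]
    exact tsum_congr hterm
  rw [hL] at hmul
  have hmulR : Real.pi ^ 2 / 6 * (∑' d : ℕ, ((moebius d : ℤ) : ℝ) / (d : ℝ) ^ 2) = 1 := by
    exact_mod_cast hmul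
  have hpi : Real.pi ^ 2 ≠ 0 := by
    simp [Real.pi_ne_zero]
  field_simp at hmulR ⊢
  linarith

lemma count_mult (m q d : ℕ) (hm : 1 ≤ m) :
    ((Finset.Icc m (m + q)).filter (d ∣ ·)).card = (m + q) / d - (m - 1) / d := by
  have h1 : Finset.Icc m (m + q) = Finset.Ioc (m - 1) (m + q) := by
    rw [← Finset.Icc_add_one_left_eq_Ioc, Nat.sub_add_cancel hm]
  have h2 : Finset.Ioc 0 (m - 1) ∪ Finset.Ioc (m - 1) (m + q) = Finset.Ioc 0 (m + q) :=
    Finset.Ioc_union_Ioc_eq_Ioc (Nat.zero_le _) (le_trans (Nat.sub_le _ _) (Nat.le_add_right _ _))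
  have hdisj : Disjoint (Finset.Ioc 0 (m - 1)) (Finset.Ioc (m - 1) (m + q)) := by
    rw [Finset.disjoint_left]
    intro a ha hb
    simp only [Finset.mem_Ioc] at ha hb
    omega
  have h3 : ((Finset.Ioc 0 (m - 1)).filter (d ∣ ·)).card
      + ((Finset.Ioc (m - 1) (m + q)).filter (d ∣ ·)).card
      = ((Finset.Ioc 0 (m + q)).filter (d ∣ ·)).card := by
    rw [← Finset.card_union_of_disjoint (Finset.disjoint_filter_filter hdisj),
      ← Finset.filter_union, h2]
  have e1 := Nat.Ioc_filter_dvd_card_eq_div (m - 1) d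
  have e2 := Nat.Ioc_filter_dvd_card_eq_div (m + q) d
  simp only [h1]
  omega

lemma count_bound (m q d : ℕ) (hm : 1 ≤ m) (hd : 1 ≤ d) :
    |(((Finset.Icc m (m + q)).filter (d ∣ ·)).card : ℝ) - (q : ℝ) / (d : ℝ)| ≤ 2 := by
  rw [count_mult m q d hm]
  have hle : (m - 1) / d ≤ (m + q) / d := Nat.div_le_div_right (by omega)
  rw [Nat.cast_sub hle]
  have hdR : (0:ℝ) < (d:ℝ) := by exact_mod_cast hd
  have b1 : ((((m + q) / d : ℕ)) : ℝ) ≤ ((m : ℝ) + q) / d := by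
    have := Nat.cast_div_le (α := ℝ) (m := m + q) (n := d)
    push_cast at this ⊢; linarith
  have b2 : (((m - 1) / d : ℕ) : ℝ) ≤ ((m : ℝ) - 1) / d := by
    have := Nat.cast_div_le (α := ℝ) (m := m - 1) (n := d)
    rw [Nat.cast_sub hm] at this
    push_cast at this ⊢; linarith
  have b3 : ((m : ℝ) + q) / d - 1 < (((m + q) / d : ℕ)) := by
    have hn : (m + q) < ((m + q) / d + 1) * d := by
      rw [add_mul, one_mul]
      exact Nat.lt_div_mul_add (show 0 < d by omega)
    have : ((m + q : ℕ) : ℝ) < (((m + q) / d : ℕ) + 1) * d := by exact_mod_cast hn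
    rw [div_sub_one (ne_of_gt hdR) ] <;> try push_cast at this ⊢
    rw [div_lt_iff₀ hdR]; push_cast; linarith
  have b4 : ((m : ℝ) - 1) / d - 1 < (((m - 1) / d : ℕ)) := by
    have hn : (m - 1) < ((m - 1) / d + 1) * d := by
      rw [add_mul, one_mul]
      exact Nat.lt_div_mul_add (show 0 < d by omega)
    have : ((m - 1 : ℕ) : ℝ) < (((m - 1) / d : ℕ) + 1) * d := by exact_mod_cast hn
    rw [Nat.cast_sub hm] at this
    rw [div_sub_one (ne_of_gt hdR)]
    rw [div_lt_iff₀ hdR]; push_cast at this ⊢; linarith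
  have hq1 : ((q : ℝ) + 1) / d ≤ q / d + 1 := by
    rw [add_div]
    have : (1:ℝ)/d ≤ 1 := by
      rw [div_le_one hdR]; exact_mod_cast hd
    linarith
  have hq0 : (q:ℝ)/d ≤ ((q:ℝ)+1)/d := by
    gcongr
    linarith
  have key : ((m:ℝ) + q)/d - ((m:ℝ)-1)/d = ((q:ℝ)+1)/d := by ring
  rw [abs_le]
  constructor <;> linarith

lemma moebius_sum_divisors (n : ℕ) :
    ∑ d ∈ n.divisors, ((moebius d : ℤ) : ℝ) = if n = 1 then 1 else 0 := by
  have h := congrArg (fun f : ArithmeticFunction ℤ => f n) moebius_mul_coe_zeta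
  simp only [coe_mul_zeta_apply, one_apply] at h
  have h2 : ((∑ d ∈ n.divisors, moebius d : ℤ) : ℝ) = ((if n = 1 then (1:ℤ) else 0 : ℤ) : ℝ) := by
    exact_mod_cast h
  rw [Int.cast_sum] at h2
  rw [h2]
  split <;> simp

lemma count_eq (m₁ m₂ n D : ℕ) (h₁ : 1 ≤ m₁) (h₂ : 1 ≤ m₂) (hD : m₁ + n ≤ D) :
    ((((Finset.Icc m₁ (m₁ + n)) ×ˢ (Finset.Icc m₂ (m₂ + n))).filter
        (fun ab => Nat.gcd ab.1 ab.2 = 1)).card : ℝ)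
    = ∑ d ∈ Finset.Icc 1 D, ((moebius d : ℤ) : ℝ)
        * (((Finset.Icc m₁ (m₁ + n)).filter (d ∣ ·)).card : ℝ)
        * (((Finset.Icc m₂ (m₂ + n)).filter (d ∣ ·)).card : ℝ) := by
  set B := (Finset.Icc m₁ (m₁ + n)) ×ˢ (Finset.Icc m₂ (m₂ + n)) with hB
  have step1 : ∀ p ∈ B, (if Nat.gcd p.1 p.2 = 1 then (1:ℝ) else 0)
      = ∑ d ∈ Finset.Icc 1 D, if d ∣ p.1 ∧ d ∣ p.2 then ((moebius d : ℤ) : ℝ) else 0 := by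
    rintro ⟨a, b⟩ hp
    simp only [hB, Finset.mem_product, Finset.mem_Icc] at hp
    have ha : 0 < a := lt_of_lt_of_le h₁ hp.1.1
    have hset : (Finset.Icc 1 D).filter (fun d => d ∣ a ∧ d ∣ b) = (Nat.gcd a b).divisors := by
      ext e
      simp only [Finset.mem_filter, Finset.mem_Icc, Nat.mem_divisors, Nat.dvd_gcd_iff]
      constructor
      · rintro ⟨_, hea, heb⟩
        refine ⟨⟨hea, heb⟩, fun hg => ?_⟩
        rw [Nat.gcd_eq_zero_iff] at hg
        omega
      · rintro ⟨⟨hea, heb⟩, _⟩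
        refine ⟨⟨Nat.pos_of_dvd_of_pos hea ha, le_trans (Nat.le_of_dvd ha hea) ?_⟩, hea, heb⟩
        omega
    rw [← Finset.sum_filter, hset, moebius_sum_divisors]
  have hcard : ((B.filter (fun ab => Nat.gcd ab.1 ab.2 = 1)).card : ℝ)
      = ∑ p ∈ B, (if Nat.gcd p.1 p.2 = 1 then (1:ℝ) else 0) := by
    rw [Finset.sum_boole]
  rw [hcard, Finset.sum_congr rfl step1, Finset.sum_comm]
  refine Finset.sum_congr rfl fun d _ => ?_
  rw [← Finset.sum_filter]
  have hfp : B.filter (fun p => d ∣ p.1 ∧ d ∣ p.2)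
      = ((Finset.Icc m₁ (m₁ + n)).filter (d ∣ ·)) ×ˢ ((Finset.Icc m₂ (m₂ + n)).filter (d ∣ ·)) :=
    Finset.filter_product _ _
  rw [hfp, Finset.sum_const, Finset.card_product, nsmul_eq_mul]
  push_cast
  ring
lemma err_bound (m₁ m₂ n D : ℕ) (h₁ : 1 ≤ m₁) (h₂ : 1 ≤ m₂) (hD : m₁ + n ≤ D) (hn : 0 < n) :
    |((((Finset.Icc m₁ (m₁ + n)) ×ˢ (Finset.Icc m₂ (m₂ + n))).filter
        (fun ab => Nat.gcd ab.1 ab.2 = 1)).card : ℝ) / (n : ℝ) ^ 2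
      - ∑ d ∈ Finset.Icc 1 D, ((moebius d : ℤ) : ℝ) / (d : ℝ) ^ 2|
    ≤ 4 * (1 + Real.log D) / n + 4 * D / (n : ℝ) ^ 2 := by
  have hnR : (0:ℝ) < (n:ℝ) := by exact_mod_cast hn
  have hn2 : (0:ℝ) < (n:ℝ)^2 := by positivity
  -- key pointwise bound
  have key : |((((Finset.Icc m₁ (m₁ + n)) ×ˢ (Finset.Icc m₂ (m₂ + n))).filter
        (fun ab => Nat.gcd ab.1 ab.2 = 1)).card : ℝ)
      - (n:ℝ)^2 * ∑ d ∈ Finset.Icc 1 D, ((moebius d : ℤ) : ℝ) / (d : ℝ) ^ 2|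
      ≤ ∑ d ∈ Finset.Icc 1 D, (4 * (n:ℝ) / d + 4) := by
    rw [count_eq m₁ m₂ n D h₁ h₂ hD, Finset.mul_sum, ← Finset.sum_sub_distrib]
    refine (Finset.abs_sum_le_sum_abs _ _).trans (Finset.sum_le_sum fun d hd => ?_)
    rw [Finset.mem_Icc] at hd
    have hd1 : 1 ≤ d := hd.1
    have hdR : (0:ℝ) < (d:ℝ) := by exact_mod_cast hd1
    set c₁ := (((Finset.Icc m₁ (m₁ + n)).filter (d ∣ ·)).card : ℝ)
    set c₂ := (((Finset.Icc m₂ (m₂ + n)).filter (d ∣ ·)).card : ℝ)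
    set x := (n:ℝ)/(d:ℝ) with hx
    have hb1 : |c₁ - x| ≤ 2 := count_bound m₁ n d h₁ hd1
    have hb2 : |c₂ - x| ≤ 2 := count_bound m₂ n d h₂ hd1
    have hmu : |((moebius d : ℤ) : ℝ)| ≤ 1 := by
      rw [← Int.cast_abs]
      exact_mod_cast abs_moebius_le_one
    have hx0 : 0 ≤ x := by positivity
    have hc2nn : 0 ≤ c₂ := by positivity
    have hrw : (n:ℝ)^2 * (((moebius d : ℤ) : ℝ) / (d:ℝ)^2) = ((moebius d : ℤ) : ℝ) * x ^ 2 := by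
      rw [hx]; field_simp
    rw [hrw]
    have hre : ((moebius d : ℤ) : ℝ) * c₁ * c₂ - ((moebius d : ℤ) : ℝ) * x ^ 2
        = ((moebius d : ℤ) : ℝ) * (c₁ * c₂ - x ^ 2) := by ring
    rw [hre, abs_mul]
    have hfac : |c₁ * c₂ - x ^ 2| ≤ 4 * x + 4 := by
      have e : c₁ * c₂ - x^2 = (c₁ - x) * c₂ + x * (c₂ - x) := by ring
      rw [e]
      refine (abs_add_le _ _).trans ?_
      rw [abs_mul, abs_mul, abs_of_nonneg hc2nn, abs_of_nonneg hx0]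
      have hc2le : c₂ ≤ x + 2 := by
        have := abs_le.mp hb2
        linarith [this.2]
      nlinarith [abs_nonneg (c₁ - x), abs_nonneg (c₂ - x)]
    calc |((moebius d : ℤ) : ℝ)| * |c₁ * c₂ - x ^ 2| ≤ 1 * (4 * x + 4) := by
          apply mul_le_mul hmu hfac (abs_nonneg _) zero_le_one
      _ = 4 * (n:ℝ)/d + 4 := by rw [hx]; ring
  -- bound the sum
  have hsum : ∑ d ∈ Finset.Icc 1 D, (4 * (n:ℝ) / d + 4)
      ≤ 4 * n * (1 + Real.log D) + 4 * D := by
    rw [Finset.sum_add_distrib, Finset.sum_const, Nat.card_Icc]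
    have hharm : ∑ d ∈ Finset.Icc 1 D, (4 * (n:ℝ) / d) = 4 * n * ∑ d ∈ Finset.Icc 1 D, ((d:ℝ))⁻¹ := by
      rw [Finset.mul_sum]
      exact Finset.sum_congr rfl fun d _ => by rw [div_eq_mul_inv]
    rw [hharm]
    have hH : ∑ d ∈ Finset.Icc 1 D, ((d:ℝ))⁻¹ = ((harmonic D : ℚ) : ℝ) := by
      rw [harmonic_eq_sum_Icc]
      push_cast
      rfl
    have hlog := harmonic_le_one_add_log D
    rw [hH]
    have h4n : (0:ℝ) ≤ 4 * n := by positivity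
    have hcard : ((D + 1 - 1) : ℕ) = D := by omega
    rw [hcard]
    have := mul_le_mul_of_nonneg_left hlog h4n
    simp only [nsmul_eq_mul]
    linarith
  -- combine
  have expand : ((((Finset.Icc m₁ (m₁ + n)) ×ˢ (Finset.Icc m₂ (m₂ + n))).filter
        (fun ab => Nat.gcd ab.1 ab.2 = 1)).card : ℝ) / (n : ℝ) ^ 2
      - ∑ d ∈ Finset.Icc 1 D, ((moebius d : ℤ) : ℝ) / (d : ℝ) ^ 2
      = (((((Finset.Icc m₁ (m₁ + n)) ×ˢ (Finset.Icc m₂ (m₂ + n))).filter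
        (fun ab => Nat.gcd ab.1 ab.2 = 1)).card : ℝ)
      - (n:ℝ)^2 * ∑ d ∈ Finset.Icc 1 D, ((moebius d : ℤ) : ℝ) / (d : ℝ) ^ 2) / (n:ℝ)^2 := by
    field_simp
  rw [expand, abs_div, abs_of_pos hn2, div_le_iff₀ hn2]
  have target : (4 * (1 + Real.log D) / n + 4 * D / (n : ℝ) ^ 2) * (n:ℝ)^2
      = 4 * n * (1 + Real.log D) + 4 * D := by
    field_simp
  rw [target]
  exact key.trans hsum

theorem coprime_pairs_in_boxes (q₁ q₂ q : ℕ → ℕ)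
    (hq_pos : ∀ k, 0 < q k) (hq₁_pos : ∀ k, 0 < q₁ k) (hq₂_pos : ∀ k, 0 < q₂ k)
    (hq : Tendsto q atTop atTop)
    (hmax : Tendsto (fun k => (max (q₁ k) (q₂ k) : ℝ) / (q k : ℝ) ^ 2) atTop (nhds 0)) :
    Tendsto (fun k =>
      (((Finset.Icc (q₁ k) (q₁ k + q k) ×ˢ Finset.Icc (q₂ k) (q₂ k + q k)).filter
          (fun ab => Nat.gcd ab.1 ab.2 = 1)).card : ℝ) / (q k : ℝ) ^ 2)
      atTop (nhds (6 / Real.pi ^ 2)) := by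
  set D : ℕ → ℕ := fun k => max (q₁ k) (q₂ k) + q k with hDdef
  set g : ℕ → ℝ := fun d => ((moebius d : ℤ) : ℝ) / (d : ℝ) ^ 2 with hgdef
  set S : ℕ → ℝ := fun k => ∑ d ∈ Finset.Icc 1 (D k), g d with hSdef
  set C : ℕ → ℝ := fun k =>
      (((Finset.Icc (q₁ k) (q₁ k + q k) ×ˢ Finset.Icc (q₂ k) (q₂ k + q k)).filter
          (fun ab => Nat.gcd ab.1 ab.2 = 1)).card : ℝ) with hCdef
  have hq' : Tendsto (fun k => (q k : ℝ)) atTop atTop :=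
    tendsto_natCast_atTop_atTop.comp hq
  have hDq : ∀ k, q k ≤ D k := fun k => Nat.le_add_left _ _
  have hDtop : Tendsto D atTop atTop := tendsto_atTop_mono hDq hq
  -- limit of partial sums
  have hHasSum : HasSum g (6 / Real.pi ^ 2) := by
    have := summable_mu.hasSum
    rwa [tsum_mu] at this
  have hIcc : ∀ N : ℕ, ∑ d ∈ Finset.Icc 1 N, g d = ∑ d ∈ Finset.range (N + 1), g d := by
    intro N
    apply Finset.sum_subset
    · intro x hx
      rw [Finset.mem_Icc] at hx
      rw [Finset.mem_range]
      omega
    · intro x hx hx'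
      rw [Finset.mem_range] at hx
      rw [Finset.mem_Icc] at hx'
      have : x = 0 := by omega
      subst this
      simp [hgdef]
  have hS : Tendsto S atTop (nhds (6 / Real.pi ^ 2)) := by
    have hps := hHasSum.tendsto_sum_nat
    have hD1 : Tendsto (fun k => D k + 1) atTop atTop :=
      tendsto_atTop_mono (fun k => Nat.le_succ _) hDtop
    have := hps.comp hD1
    refine this.congr fun k => ?_
    simp only [Function.comp_apply, hSdef]
    exact (hIcc (D k)).symm
  -- error term
  have herr : Tendsto (fun k => C k / (q k : ℝ) ^ 2 - S k) atTop (nhds 0) := by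
    apply squeeze_zero_norm'
      (a := fun k => 4 * (1 + Real.log (D k)) / (q k : ℝ) + 4 * (D k : ℝ) / (q k : ℝ) ^ 2)
    · filter_upwards with k
      rw [Real.norm_eq_abs]
      exact err_bound (q₁ k) (q₂ k) (q k) (D k) (hq₁_pos k) (hq₂_pos k)
        (by simp only [hDdef]; omega) (hq_pos k)
    · have hA2 : Tendsto (fun k => 4 * (D k : ℝ) / (q k : ℝ) ^ 2) atTop (nhds 0) := by
        have e : ∀ k, 4 * (D k : ℝ) / (q k : ℝ) ^ 2
            = 4 * ((max (q₁ k) (q₂ k) : ℝ) / (q k : ℝ) ^ 2) + 4 * ((q k : ℝ))⁻¹ := by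
          intro k
          have hqk : ((q k : ℝ)) ≠ 0 := by
            exact_mod_cast (hq_pos k).ne'
          have : ((D k : ℕ) : ℝ) = max ((q₁ k : ℝ)) ((q₂ k : ℝ)) + (q k : ℝ) := by
            simp [hDdef, Nat.cast_max]
          rw [this]
          field_simp
        rw [show (0:ℝ) = 4 * 0 + 4 * 0 by ring]
        exact Tendsto.congr (fun k => (e k).symm)
          (((hmax.const_mul 4)).add ((tendsto_inv_atTop_zero.comp hq').const_mul 4))
      have hA1 : Tendsto (fun k => 4 * (1 + Real.log (D k)) / (q k : ℝ)) atTop (nhds 0) := by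
        have hF : Tendsto (fun x : ℝ => 4 * (1 + 3 * Real.log x) / x) atTop (nhds 0) := by
          have h1 : Tendsto (fun x : ℝ => 4 * x⁻¹ + 12 * (Real.log x / x)) atTop (nhds 0) := by
            rw [show (0:ℝ) = 4 * 0 + 12 * 0 by ring]
            exact (tendsto_inv_atTop_zero.const_mul 4).add
              ((Real.isLittleO_log_id_atTop.tendsto_div_nhds_zero).const_mul 12)
          refine h1.congr fun x => ?_
          field_simp
          ring
        have hFq := hF.comp hq'
        -- eventual bounds
        have hev1 : ∀ᶠ k in atTop, (2 : ℝ) ≤ (q k : ℝ) :=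
          hq'.eventually_ge_atTop 2
        have hev2 : ∀ᶠ k in atTop, (max (q₁ k) (q₂ k) : ℝ) / (q k : ℝ) ^ 2 < 1 :=
          hmax.eventually_lt_const one_pos
        have hlow : ∀ᶠ k in atTop, (0:ℝ) ≤ 4 * (1 + Real.log (D k)) / (q k : ℝ) := by
          filter_upwards with k
          have hD1 : (1:ℝ) ≤ (D k : ℝ) := by
            have : 1 ≤ D k := le_trans (hq_pos k) (hDq k)
            exact_mod_cast this
          have hlog := Real.log_nonneg hD1
          have hqk : (0:ℝ) ≤ (q k : ℝ) := Nat.cast_nonneg _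
          positivity
        have hup : ∀ᶠ k in atTop,
            4 * (1 + Real.log (D k)) / (q k : ℝ)
              ≤ (fun x : ℝ => 4 * (1 + 3 * Real.log x) / x) ((q k : ℝ)) := by
          filter_upwards [hev1, hev2] with k h2 hm
          show 4 * (1 + Real.log (D k)) / (q k : ℝ) ≤ 4 * (1 + 3 * Real.log (q k)) / (q k : ℝ)
          have hqpos : (0:ℝ) < (q k : ℝ) := by linarith
          have hq2 : (0:ℝ) < (q k : ℝ) ^ 2 := by positivity
          have hmlt : (max (q₁ k) (q₂ k) : ℝ) < (q k : ℝ) ^ 2 := by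
            have := (div_lt_one hq2).mp hm
            linarith
          have hDle : (D k : ℝ) ≤ (q k : ℝ) ^ 3 := by
            have hcast : ((D k : ℕ) : ℝ) = max ((q₁ k : ℝ)) ((q₂ k : ℝ)) + (q k : ℝ) := by
              simp [hDdef, Nat.cast_max]
            rw [hcast]
            nlinarith [hmlt]
          have hDpos : (0:ℝ) < (D k : ℝ) := by
            have : 1 ≤ D k := le_trans (hq_pos k) (hDq k)
            exact_mod_cast this
          have hlogD : Real.log (D k) ≤ 3 * Real.log (q k) := by
            calc Real.log (D k) ≤ Real.log ((q k : ℝ) ^ 3) :=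
                  Real.log_le_log hDpos hDle
              _ = 3 * Real.log (q k) := by
                  rw [Real.log_pow]
                  push_cast
                  ring
          gcongr
        exact tendsto_of_tendsto_of_tendsto_of_le_of_le' tendsto_const_nhds hFq hlow hup
      rw [show (0:ℝ) = 0 + 0 by ring]
      exact hA1.add hA2
  have final : (fun k => C k / (q k : ℝ) ^ 2)
      = fun k => (C k / (q k : ℝ) ^ 2 - S k) + S k := by
    funext k
    ring
  have hcomb := herr.add hS
  rw [zero_add] at hcomb
  rw [final]
  exact hcomb
end

section
/- If P and Q are independent random variables each uniformly distributed on {1, 2, ..., m}, then the probability that gcd(P, Q) = 1 converges to 6/π² as m → ∞. -/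
open Filter

open Nat ArithmeticFunction Finset in
open scoped ArithmeticFunction.zeta in
private lemma hdivsum' (n : ℕ) :
    (∑ d ∈ n.divisors, moebius d) = if n = 1 then 1 else 0 := by
  have h : (moebius * (ζ : ArithmeticFunction ℤ)) n = (1 : ArithmeticFunction ℤ) n := by
    rw [moebius_mul_coe_zeta]
  rwa [coe_mul_zeta_apply, one_apply] at h

open Nat ArithmeticFunction Finset in
private lemma gcd_divisors_eq' (m p q : ℕ) (hp1 : 1 ≤ p) (hpm : p ≤ m) (hq1 : 1 ≤ q) :
    (Nat.gcd p q).divisors = (Finset.Icc 1 m).filter fun d => d ∣ p ∧ d ∣ q := by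
  ext d
  simp only [Nat.mem_divisors, Finset.mem_filter, Finset.mem_Icc, Nat.dvd_gcd_iff]
  constructor
  · rintro ⟨⟨hp, hq⟩, -⟩
    have hd0 : d ≠ 0 := by rintro rfl; rw [zero_dvd_iff] at hp; omega
    exact ⟨⟨Nat.one_le_iff_ne_zero.mpr hd0, (Nat.le_of_dvd (by omega) hp).trans hpm⟩, hp, hq⟩
  · rintro ⟨-, hp, hq⟩
    exact ⟨⟨hp, hq⟩, Nat.gcd_ne_zero_left (by omega)⟩

open Nat ArithmeticFunction Finset in
private lemma count_eq' (m : ℕ) :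
    ((((Finset.Icc 1 m ×ˢ Finset.Icc 1 m).filter
        fun pq => Nat.gcd pq.1 pq.2 = 1).card : ℤ)) =
    ∑ d ∈ Finset.Icc 1 m, moebius d * ((m / d : ℕ) : ℤ) ^ 2 := by
  classical
  set S := Finset.Icc 1 m ×ˢ Finset.Icc 1 m with hS
  calc ((S.filter fun pq => Nat.gcd pq.1 pq.2 = 1).card : ℤ)
      = ∑ pq ∈ S, if Nat.gcd pq.1 pq.2 = 1 then (1 : ℤ) else 0 := by
        rw [Finset.card_filter]; push_cast; rfl
    _ = ∑ pq ∈ S, ∑ d ∈ (Nat.gcd pq.1 pq.2).divisors, moebius d :=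
        Finset.sum_congr rfl fun pq _ => (hdivsum' _).symm
    _ = ∑ pq ∈ S, ∑ d ∈ (Finset.Icc 1 m).filter (fun d => d ∣ pq.1 ∧ d ∣ pq.2), moebius d := by
        refine Finset.sum_congr rfl fun pq hpq => ?_
        simp only [hS, Finset.mem_product, Finset.mem_Icc] at hpq
        rw [gcd_divisors_eq' m pq.1 pq.2 hpq.1.1 hpq.1.2 hpq.2.1]
    _ = ∑ pq ∈ S, ∑ d ∈ Finset.Icc 1 m, if d ∣ pq.1 ∧ d ∣ pq.2 then moebius d else 0 := by
        simp [Finset.sum_filter]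
    _ = ∑ d ∈ Finset.Icc 1 m, ∑ pq ∈ S, if d ∣ pq.1 ∧ d ∣ pq.2 then moebius d else 0 :=
        Finset.sum_comm
    _ = ∑ d ∈ Finset.Icc 1 m, moebius d * ((m / d : ℕ) : ℤ) ^ 2 := by
        refine Finset.sum_congr rfl fun d _ => ?_
        rw [← Finset.sum_filter, Finset.sum_const]
        have hcard : (S.filter fun pq => d ∣ pq.1 ∧ d ∣ pq.2).card = (m / d) ^ 2 := by
          have heq : (S.filter fun pq => d ∣ pq.1 ∧ d ∣ pq.2)
              = ((Finset.Icc 1 m).filter (d ∣ ·)) ×ˢ ((Finset.Icc 1 m).filter (d ∣ ·)) := by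
            rw [hS, Finset.filter_product]
          rw [heq, Finset.card_product,
            show Finset.Icc 1 m = Finset.Ioc 0 m from rfl,
            Nat.Ioc_filter_dvd_card_eq_div, sq]
        rw [hcard, nsmul_eq_mul, Nat.cast_pow, mul_comm]

open Nat ArithmeticFunction Finset in
open scoped LSeries.notation in
private lemma tsum_moebius_div_sq' :
    ∑' d : ℕ, (moebius d : ℝ) / (d : ℝ) ^ 2 = 6 / Real.pi ^ 2 := by
  have h2 : (1 : ℝ) < (2 : ℂ).re := by norm_num
  have hpi : ((Real.pi : ℂ)) ^ 2 ≠ 0 :=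
    pow_ne_zero 2 (Complex.ofReal_ne_zero.mpr Real.pi_ne_zero)
  have hL : LSeries ↗moebius 2 = 6 / (Real.pi : ℂ) ^ 2 := by
    have h := LSeries_zeta_mul_Lseries_moebius (s := 2) h2
    rw [LSeries_zeta_eq_riemannZeta h2, riemannZeta_two] at h
    field_simp at h ⊢
    linear_combination h
  have hterm : ∀ d : ℕ, LSeries.term ↗moebius 2 d = ((moebius d : ℝ) / (d : ℝ) ^ 2 : ℝ) := by
    intro d
    rcases eq_or_ne d 0 with rfl | hd
    · simp [LSeries.term]
    · rw [LSeries.term_of_ne_zero hd]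
      push_cast
      rw [show (2 : ℂ) = ((2 : ℕ) : ℂ) by norm_num, Complex.cpow_natCast]
  have hkey : ((∑' d : ℕ, (moebius d : ℝ) / (d : ℝ) ^ 2 : ℝ) : ℂ)
      = ((6 / Real.pi ^ 2 : ℝ) : ℂ) := by
    rw [Complex.ofReal_tsum,
      show (∑' d : ℕ, (((moebius d : ℝ) / (d : ℝ) ^ 2 : ℝ) : ℂ)) = LSeries ↗moebius 2 from
        tsum_congr fun d => (hterm d).symm, hL]
    push_cast
    ring
  exact_mod_cast hkey

open Nat ArithmeticFunction Finset in
private lemma ratio_tendsto' (d : ℕ) (hd : 1 ≤ d) :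
    Tendsto (fun m : ℕ => ((m / d : ℕ) : ℝ) / (m : ℝ)) atTop (nhds (1 / d)) := by
  have hd0 : (d : ℝ) ≠ 0 := Nat.cast_ne_zero.mpr (by omega)
  have heq : ∀ᶠ m : ℕ in atTop, ((m / d : ℕ) : ℝ) / (m : ℝ)
      = (1 - ((m % d : ℕ) : ℝ) / m) / d := by
    filter_upwards [eventually_ge_atTop 1] with m hm
    have hm0 : (m : ℝ) ≠ 0 := Nat.cast_ne_zero.mpr (by omega)
    have h := congrArg (fun k : ℕ => (k : ℝ)) (Nat.div_add_mod m d)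
    push_cast at h
    have hx : ((m / d : ℕ) : ℝ) = ((m : ℝ) - (m % d : ℕ)) / d := by
      rw [eq_div_iff hd0]; linarith
    rw [hx, div_right_comm, sub_div, div_self hm0]
  have hmod : Tendsto (fun m : ℕ => ((m % d : ℕ) : ℝ) / m) atTop (nhds 0) := by
    apply squeeze_zero (fun m => by positivity) (fun m => ?_)
      (tendsto_const_div_atTop_nhds_zero_nat (d : ℝ))
    gcongr
    exact_mod_cast (Nat.mod_lt m (by omega)).le
  have h2 : Tendsto (fun m : ℕ => (1 - ((m % d : ℕ) : ℝ) / m) / d) atTop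
      (nhds ((1 - 0) / d)) := (tendsto_const_nhds.sub hmod).div_const _
  rw [sub_zero] at h2
  exact h2.congr' (EventuallyEq.symm heq)

open Nat ArithmeticFunction Finset in
/-- If `P` and `Q` are independent uniform random variables on `{1,…,m}`, the
probability that `gcd (P, Q) = 1` (i.e. the fraction of pairs in `{1,…,m}²` that are
coprime) tends to `6/π²` as `m → ∞`. -/
theorem prob_coprime_uniform_tendsto :
    Tendsto (fun m : ℕ =>
      (((Finset.Icc 1 m ×ˢ Finset.Icc 1 m).filter
          (fun pq => Nat.gcd pq.1 pq.2 = 1)).card : ℝ) / (m : ℝ) ^ 2)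
      atTop (nhds (6 / Real.pi ^ 2)) := by
  classical
  set f : ℕ → ℕ → ℝ := fun m d => (moebius d : ℝ) * (((m / d : ℕ) : ℝ) / m) ^ 2 with hf
  set g : ℕ → ℝ := fun d => (moebius d : ℝ) / (d : ℝ) ^ 2 with hg
  have habs : ∀ d : ℕ, |(moebius d : ℝ)| ≤ 1 := by
    intro d
    have := abs_moebius_le_one (n := d)
    calc |(moebius d : ℝ)| = ((|moebius d| : ℤ) : ℝ) := by push_cast; rfl
      _ ≤ 1 := by exact_mod_cast this
  have hratio_le : ∀ m d : ℕ, 1 ≤ d → ((m / d : ℕ) : ℝ) / m ≤ 1 / d := by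
    intro m d hd
    rcases Nat.eq_zero_or_pos m with rfl | hm
    · simp
    · have hdm : ((m / d : ℕ) : ℝ) * d ≤ m := by exact_mod_cast Nat.div_mul_le_self m d
      rw [div_le_div_iff₀ (by exact_mod_cast hm) (by exact_mod_cast hd)]
      linarith
  have hbound : ∀ m d : ℕ, ‖f m d‖ ≤ 1 / (d : ℝ) ^ 2 := by
    intro m d
    rcases Nat.eq_zero_or_pos d with rfl | hd
    · simp [hf]
    · rw [hf, Real.norm_eq_abs, abs_mul, abs_pow,
        show (1 : ℝ) / (d : ℝ) ^ 2 = 1 * (1 / d) ^ 2 by rw [one_mul, div_pow, one_pow]]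
      have h1 : |((m / d : ℕ) : ℝ) / m| = ((m / d : ℕ) : ℝ) / m := abs_of_nonneg (by positivity)
      rw [h1]
      have h2 : (0:ℝ) ≤ ((m / d : ℕ) : ℝ) / m := by positivity
      exact mul_le_mul (habs d) (pow_le_pow_left₀ h2 (hratio_le m d hd) 2)
        (by positivity) zero_le_one
  have hsummable : Summable fun d : ℕ => 1 / (d : ℝ) ^ 2 :=
    Real.summable_one_div_nat_pow.mpr one_lt_two
  have hab : ∀ d : ℕ, Tendsto (fun m => f m d) atTop (nhds (g d)) := by
    intro d
    rcases Nat.eq_zero_or_pos d with rfl | hd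
    · simp [hf, hg]
    · have h := ((ratio_tendsto' d hd).pow 2).const_mul ((moebius d : ℝ))
      have hgd : g d = (moebius d : ℝ) * ((1 : ℝ) / d) ^ 2 := by
        rw [hg, div_pow, one_pow]; ring
      rw [hgd]
      exact h
  have hDC : Tendsto (fun m => ∑' d, f m d) atTop (nhds (∑' d, g d)) :=
    tendsto_tsum_of_dominated_convergence hsummable hab
      (Eventually.of_forall fun m => hbound m)
  have htsum : ∑' d, g d = 6 / Real.pi ^ 2 := tsum_moebius_div_sq'
  rw [htsum] at hDC
  refine hDC.congr' ?_
  filter_upwards [eventually_ge_atTop 1] with m hm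
  have hm0 : (m : ℝ) ≠ 0 := Nat.cast_ne_zero.mpr (by omega)
  have hvanish : ∀ d ∉ Finset.Icc 1 m, f m d = 0 := by
    intro d hd
    simp only [Finset.mem_Icc, not_and_or, not_le] at hd
    rcases hd with hd | hd
    · interval_cases d
      simp [hf]
    · have : m / d = 0 := Nat.div_eq_of_lt hd
      simp [hf, this]
  rw [tsum_eq_sum hvanish]
  have hcast := congrArg (fun z : ℤ => (z : ℝ)) (count_eq' m)
  simp only [Int.cast_sum, Int.cast_mul, Int.cast_pow, Int.cast_natCast] at hcast
  rw [hcast, Finset.sum_div]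
  refine Finset.sum_congr rfl fun d _ => ?_
  simp only [hf, div_pow]
  ring
end

section
/- Let p be a positive integer and let Z₁, ..., Z_p be independent random variables, where each Z_i is uniformly distributed on an integer interval [q_i, q_i + q] of length q with q → ∞ as p → ∞ and max_i q_i = o(q²). Then the probability that gcd(Z₁, ..., Z_p) ≠ 1 is at most (1 − 6/π² + o(1))^{⌊p/2⌋}, and in particular tends to 0 exponentially fast in p. -/
open Filter

lemma count_dvd_le (a Q ℓ : ℕ) (ha : 0 < a) (hℓ : 0 < ℓ) :
    (((Finset.Icc a (a+Q)).filter (ℓ ∣ ·)).card : ℕ) ≤ (Q+1)/ℓ + 1 := by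
  have h1 : Finset.Icc a (a+Q) = Finset.Ioc (a-1) (a+Q) := by
    ext x; simp [Finset.mem_Icc, Finset.mem_Ioc]; omega
  have h2 : Finset.Ioc 0 (a+Q) = Finset.Ioc 0 (a-1) ∪ Finset.Ioc (a-1) (a+Q) := by
    rw [Finset.Ioc_union_Ioc_eq_Ioc] <;> omega
  have hd : Disjoint (Finset.Ioc 0 (a-1)) (Finset.Ioc (a-1) (a+Q)) := by
    simp [Finset.disjoint_left, Finset.mem_Ioc]; omega
  have h3 : ((Finset.Ioc 0 (a-1)).filter (ℓ ∣ ·)).card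
      + ((Finset.Ioc (a-1) (a+Q)).filter (ℓ ∣ ·)).card = (a+Q)/ℓ := by
    rw [← Nat.Ioc_filter_dvd_card_eq_div, h2, Finset.filter_union,
      Finset.card_union_of_disjoint (hd.mono (Finset.filter_subset _ _) (Finset.filter_subset _ _))]
  have h4 := Nat.Ioc_filter_dvd_card_eq_div (a-1) ℓ
  rw [h1]
  have hdiv : (a+Q)/ℓ ≤ (a-1)/ℓ + (Q+1)/ℓ + 1 := by
    have : a + Q = (a-1) + (Q+1) := by omega
    rw [this, Nat.add_div hℓ]
    split <;> omega
  omega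

lemma piFinset_filter {p : ℕ} (t : Fin p → Finset ℕ) (P : ℕ → Prop) [DecidablePred P] :
    (Fintype.piFinset t).filter (fun z => ∀ i, P (z i))
      = Fintype.piFinset (fun i => (t i).filter P) := by
  ext z
  simp only [Finset.mem_filter, Fintype.mem_piFinset, forall_and]

lemma card_bound (p Q M : ℕ) (a : Fin p → ℕ) (ha : ∀ i, 0 < a i) (hp : 0 < p)
    (hM : ∀ i, a i + Q ≤ M) :
    ((Fintype.piFinset (fun i => Finset.Icc (a i) (a i + Q))).filter
      (fun z => Finset.univ.gcd z ≠ 1)).card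
    ≤ ∑ ℓ ∈ Finset.Ioc 1 M, ∏ i, ((Finset.Icc (a i) (a i + Q)).filter (ℓ ∣ ·)).card := by
  have hsub : ((Fintype.piFinset (fun i => Finset.Icc (a i) (a i + Q))).filter
      (fun z => Finset.univ.gcd z ≠ 1))
      ⊆ (Finset.Ioc 1 M).biUnion (fun ℓ =>
        (Fintype.piFinset (fun i => Finset.Icc (a i) (a i + Q))).filter
          (fun z => ∀ i, ℓ ∣ z i)) := by
    intro z hz
    rw [Finset.mem_filter] at hz
    obtain ⟨hz1, hz2⟩ := hz
    set g := Finset.univ.gcd z with hg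
    have hdvd : ∀ i : Fin p, g ∣ z i := fun i => Finset.gcd_dvd (Finset.mem_univ i)
    have i0 : Fin p := ⟨0, hp⟩
    have hz0 : z i0 ∈ Finset.Icc (a i0) (a i0 + Q) := by
      rw [Fintype.mem_piFinset] at hz1; exact hz1 i0
    rw [Finset.mem_Icc] at hz0
    have hz0pos : 0 < z i0 := lt_of_lt_of_le (ha i0) hz0.1
    have hgle : g ≤ M := le_trans (Nat.le_of_dvd hz0pos (hdvd i0)) (le_trans hz0.2 (hM i0))
    have hg2 : 2 ≤ g := by
      rcases Nat.lt_or_ge g 2 with h | h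
      · interval_cases g
        · have := Nat.eq_zero_of_zero_dvd (hdvd i0); omega
        · exact absurd rfl hz2
      · exact h
    refine Finset.mem_biUnion.mpr ⟨g, Finset.mem_Ioc.mpr ⟨by omega, hgle⟩, ?_⟩
    exact Finset.mem_filter.mpr ⟨hz1, hdvd⟩
  calc _ ≤ _ := Finset.card_le_card hsub
    _ ≤ ∑ ℓ ∈ Finset.Ioc 1 M, ((Fintype.piFinset (fun i => Finset.Icc (a i) (a i + Q))).filter
          (fun z => ∀ i, ℓ ∣ z i)).card := Finset.card_biUnion_le
    _ ≤ _ := by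
      apply Finset.sum_le_sum
      intro ℓ _
      rw [piFinset_filter, Fintype.card_piFinset]

lemma sum_inv_sq (n : ℕ) : ∑ ℓ ∈ Finset.Ioc 1 n, ((1:ℝ)/(ℓ:ℝ))^2 ≤ 1 := by
  have h : ∀ m : ℕ, 1 ≤ m → ∑ ℓ ∈ Finset.Ioc 1 m, ((1:ℝ)/(ℓ:ℝ))^2 ≤ 1 - 1/(m:ℝ) := by
    intro m hm
    induction m with
    | zero => omega
    | succ k ih =>
      rcases Nat.eq_or_lt_of_le hm with h1 | h1
      · simp [← h1]
      · have hk : 1 ≤ k := by omega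
        rw [Finset.sum_Ioc_succ_top (by omega : 1 ≤ k)]
        have hkr : (1:ℝ) ≤ (k:ℝ) := by exact_mod_cast hk
        have hstep : ((1:ℝ)/((k:ℝ)+1))^2 ≤ 1/(k:ℝ) - 1/((k:ℝ)+1) := by
          rw [div_sub_div _ _ (by positivity) (by positivity), div_pow, one_pow,
            div_le_div_iff₀ (by positivity) (by positivity)]
          nlinarith
        have := ih hk
        push_cast
        linarith
  rcases Nat.lt_or_ge n 2 with h2 | h2
  · interval_cases n <;> simp
  · have h3 := h n (by omega)
    have h4 : (0:ℝ) < 1/(n:ℝ) := by positivity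
    linarith

lemma sum_est (p Q M : ℕ) (hp : 60 ≤ p) (hQ : 100 ≤ Q) (hM : M ≤ 2*Q^2) (hMQ : Q+1 ≤ M)
    (t : ℕ → ℝ) (ht0 : ∀ ℓ, 0 ≤ t ℓ)
    (ht1 : ∀ ℓ, 2 ≤ ℓ → ℓ ≤ Q+1 → t ℓ ≤ ((1:ℝ)/ℓ + 1/((Q:ℝ)+1))^p)
    (ht2 : ∀ ℓ, Q+1 < ℓ → t ℓ ≤ ((1:ℝ)/((Q:ℝ)+1))^p) :
    ∑ ℓ ∈ Finset.Ioc 1 M, t ℓ ≤ (0.626:ℝ)^p := by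
  have hQr : (101:ℝ) ≤ (Q:ℝ)+1 := by
    have : (100:ℝ) ≤ (Q:ℝ) := by exact_mod_cast hQ
    linarith
  have hsplit : ∑ ℓ ∈ Finset.Ioc 1 M, t ℓ
      = ∑ ℓ ∈ Finset.Ioc 1 (Q+1), t ℓ + ∑ ℓ ∈ Finset.Ioc (Q+1) M, t ℓ :=
    (Finset.sum_Ioc_consecutive _ (by omega) hMQ).symm
  have hb2 : (0:ℝ) < 1/2 + 1/((Q:ℝ)+1) := by positivity
  have hb2' : (1:ℝ)/2 + 1/((Q:ℝ)+1) ≤ 0.51 := by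
    have : (1:ℝ)/((Q:ℝ)+1) ≤ 1/101 := by
      apply div_le_div_of_nonneg_left (by norm_num) (by norm_num) hQr
    norm_num at this ⊢
    linarith
  have hA : ∑ ℓ ∈ Finset.Ioc 1 (Q+1), t ℓ
      ≤ 16 * (0.51:ℝ)^p := by
    have step : ∀ ℓ ∈ Finset.Ioc 1 (Q+1),
        t ℓ ≤ (0.51:ℝ)^(p-2) * (4 * ((1:ℝ)/(ℓ:ℝ))^2) := by
      intro ℓ hℓ
      rw [Finset.mem_Ioc] at hℓ
      have hℓ2 : (2:ℝ) ≤ (ℓ:ℝ) := by exact_mod_cast hℓ.1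
      have hℓQ : (ℓ:ℝ) ≤ (Q:ℝ)+1 := by
        have := hℓ.2; exact_mod_cast this
      have hbpos : (0:ℝ) ≤ 1/(ℓ:ℝ) + 1/((Q:ℝ)+1) := by positivity
      have hble : (1:ℝ)/(ℓ:ℝ) + 1/((Q:ℝ)+1) ≤ 0.51 := by
        have h1 : (1:ℝ)/(ℓ:ℝ) ≤ 1/2 := by
          apply div_le_div_of_nonneg_left (by norm_num) (by norm_num) hℓ2
        have h2 : (1:ℝ)/((Q:ℝ)+1) ≤ 1/101 := by
          apply div_le_div_of_nonneg_left (by norm_num) (by norm_num) hQr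
        norm_num at h1 h2 ⊢; linarith
      have hble2 : (1:ℝ)/(ℓ:ℝ) + 1/((Q:ℝ)+1) ≤ 2/(ℓ:ℝ) := by
        have : (1:ℝ)/((Q:ℝ)+1) ≤ 1/(ℓ:ℝ) := by
          apply div_le_div_of_nonneg_left (by norm_num) (by linarith) hℓQ
        have h2ℓ : (2:ℝ)/(ℓ:ℝ) = 1/(ℓ:ℝ) + 1/(ℓ:ℝ) := by ring
        linarith
      calc t ℓ ≤ ((1:ℝ)/(ℓ:ℝ) + 1/((Q:ℝ)+1))^p := ht1 ℓ hℓ.1 hℓ.2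
        _ = ((1:ℝ)/(ℓ:ℝ) + 1/((Q:ℝ)+1))^(p-2) * ((1:ℝ)/(ℓ:ℝ) + 1/((Q:ℝ)+1))^2 := by
            rw [← pow_add]; congr 1; omega
        _ ≤ (0.51:ℝ)^(p-2) * (4 * ((1:ℝ)/(ℓ:ℝ))^2) := by
            apply mul_le_mul (pow_le_pow_left₀ hbpos hble _) ?_ (by positivity) (by positivity)
            calc ((1:ℝ)/(ℓ:ℝ) + 1/((Q:ℝ)+1))^2 ≤ (2/(ℓ:ℝ))^2 := pow_le_pow_left₀ hbpos hble2 _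
              _ = 4 * ((1:ℝ)/(ℓ:ℝ))^2 := by ring
    calc ∑ ℓ ∈ Finset.Ioc 1 (Q+1), t ℓ
        ≤ ∑ ℓ ∈ Finset.Ioc 1 (Q+1), (0.51:ℝ)^(p-2) * (4 * ((1:ℝ)/(ℓ:ℝ))^2) :=
          Finset.sum_le_sum step
      _ = (0.51:ℝ)^(p-2) * 4 * ∑ ℓ ∈ Finset.Ioc 1 (Q+1), ((1:ℝ)/(ℓ:ℝ))^2 := by
          rw [Finset.mul_sum]; apply Finset.sum_congr rfl; intros; ring
      _ ≤ (0.51:ℝ)^(p-2) * 4 * 1 := by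
          apply mul_le_mul_of_nonneg_left (sum_inv_sq _) (by positivity)
      _ ≤ 16 * (0.51:ℝ)^p := by
          have : (0.51:ℝ)^p = (0.51:ℝ)^(p-2) * (0.51:ℝ)^2 := by
            rw [← pow_add]; congr 1; omega
          rw [this]; ring_nf; nlinarith [pow_nonneg (by norm_num : (0:ℝ) ≤ 0.51) (p-2)]
  have hB : ∑ ℓ ∈ Finset.Ioc (Q+1) M, t ℓ ≤ 20402 * ((1:ℝ)/101)^p := by
    calc ∑ ℓ ∈ Finset.Ioc (Q+1) M, t ℓ
        ≤ ∑ ℓ ∈ Finset.Ioc (Q+1) M, ((1:ℝ)/((Q:ℝ)+1))^p := by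
          apply Finset.sum_le_sum; intro ℓ hℓ
          rw [Finset.mem_Ioc] at hℓ; exact ht2 ℓ hℓ.1
      _ = (M - (Q+1) : ℕ) * ((1:ℝ)/((Q:ℝ)+1))^p := by
          rw [Finset.sum_const, Nat.card_Ioc]; norm_num
      _ ≤ (2*(Q:ℝ)^2) * ((1:ℝ)/((Q:ℝ)+1))^p := by
          apply mul_le_mul_of_nonneg_right ?_ (by positivity)
          have h1 : ((M - (Q+1) : ℕ) : ℝ) ≤ (M:ℝ) := by
            have : (M - (Q+1) : ℕ) ≤ M := Nat.sub_le _ _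
            exact_mod_cast this
          have h2 : (M:ℝ) ≤ 2*(Q:ℝ)^2 := by exact_mod_cast hM
          linarith
      _ ≤ (2*((Q:ℝ)+1)^2) * ((1:ℝ)/((Q:ℝ)+1))^p := by
          apply mul_le_mul_of_nonneg_right ?_ (by positivity)
          nlinarith [Nat.cast_nonneg (α := ℝ) Q]
      _ ≤ 20402 * ((1:ℝ)/101)^p := by
          have hQ0 : (0:ℝ) < (Q:ℝ)+1 := by positivity
          have key : ((Q:ℝ)+1)^2 * ((1:ℝ)/((Q:ℝ)+1))^p ≤ 101^2 * ((1:ℝ)/101)^p := by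
            have e1 : ((Q:ℝ)+1)^2 * ((1:ℝ)/((Q:ℝ)+1))^p = ((1:ℝ)/((Q:ℝ)+1))^(p-2) := by
              rw [show p = (p-2)+2 by omega, pow_add, Nat.add_sub_cancel]
              field_simp
            have e2 : (101:ℝ)^2 * ((1:ℝ)/101)^p = ((1:ℝ)/101)^(p-2) := by
              rw [show p = (p-2)+2 by omega, pow_add, Nat.add_sub_cancel]
              field_simp
            rw [e1, e2]
            apply pow_le_pow_left₀ (by positivity)
            apply div_le_div_of_nonneg_left (by norm_num) (by norm_num) hQr
          linarith
  have h101 : ((1:ℝ)/101)^p ≤ (0.51:ℝ)^p := by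
    apply pow_le_pow_left₀ (by norm_num) (by norm_num)
  have h1260 : (20418:ℝ) ≤ (1.2:ℝ)^p := by
    calc (20418:ℝ) ≤ (1.2:ℝ)^60 := by norm_num
      _ ≤ (1.2:ℝ)^p := pow_le_pow_right₀ (by norm_num) hp
  have hfin : (20418:ℝ) * (0.51:ℝ)^p ≤ (0.626:ℝ)^p := by
    calc (20418:ℝ) * (0.51:ℝ)^p ≤ (1.2:ℝ)^p * (0.51:ℝ)^p :=
          mul_le_mul_of_nonneg_right h1260 (by positivity)
      _ = ((1.2:ℝ)*0.51)^p := (mul_pow _ _ _).symm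
      _ ≤ (0.626:ℝ)^p := pow_le_pow_left₀ (by norm_num) (by norm_num) _
  have h051 : (0:ℝ) ≤ (0.51:ℝ)^p := by positivity
  linarith [hA, hB, hsplit, h101]
lemma ratio_bound (q : ℕ → ℕ) (qi : ℕ → ℕ → ℕ)
    (hq_pos : ∀ p, 0 < q p) (hqi_pos : ∀ p i, 0 < qi p i)
    (hq : Tendsto q atTop atTop)
    (hmax : Tendsto (fun p => (((Finset.range p).sup (qi p) : ℕ) : ℝ) / (q p : ℝ) ^ 2)
      atTop (nhds 0)) :
    ∀ᶠ p in atTop,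
      (((Fintype.piFinset (fun i : Fin p => Finset.Icc (qi p i) (qi p i + q p))).filter
          (fun z => Finset.univ.gcd z ≠ 1)).card : ℝ) / ((q p : ℝ) + 1) ^ p
        ≤ (0.626:ℝ) ^ p := by
  have E1 : ∀ᶠ p in atTop, 100 ≤ q p := hq.eventually_ge_atTop 100
  have E2 : ∀ᶠ p in atTop, (Finset.range p).sup (qi p) ≤ (q p)^2 := by
    filter_upwards [hmax.eventually (gt_mem_nhds (by norm_num : (0:ℝ) < 1))] with p hp
    have hq0 : (0:ℝ) < (q p : ℝ)^2 := by
      have := hq_pos p; positivity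
    have := (div_lt_one hq0).mp hp
    exact_mod_cast this.le
  filter_upwards [E1, E2, eventually_ge_atTop 60] with p hQ100 hsup hp60
  set Q := q p with hQdef
  set M := (Finset.range p).sup (qi p) + Q with hMdef
  have hppos : 0 < p := by omega
  have hQ1 : (0:ℝ) < (Q:ℝ) + 1 := by positivity
  have hMQ : Q + 1 ≤ M := by
    have h0 : qi p 0 ≤ (Finset.range p).sup (qi p) :=
      Finset.le_sup (Finset.mem_range.mpr hppos)
    have := hqi_pos p 0
    omega
  have hM2 : M ≤ 2 * Q^2 := by
    have : Q ≤ Q^2 := by nlinarith [hQ100]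
    omega
  have hMub : ∀ i : Fin p, qi p i + Q ≤ M := by
    intro i
    have : qi p (i : ℕ) ≤ (Finset.range p).sup (qi p) :=
      Finset.le_sup (Finset.mem_range.mpr i.isLt)
    omega
  -- natural number bound
  have hcard := card_bound p Q M (fun i => qi p i) (fun i => hqi_pos p i) hppos hMub
  -- define t
  set t : ℕ → ℝ := fun ℓ =>
    (∏ i : Fin p, (((Finset.Icc (qi p i) (qi p i + Q)).filter (ℓ ∣ ·)).card : ℝ))
      / ((Q:ℝ)+1)^p with htdef
  have ht0 : ∀ ℓ, 0 ≤ t ℓ := by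
    intro ℓ; apply div_nonneg ?_ (by positivity)
    exact Finset.prod_nonneg fun i _ => by positivity
  have hcount : ∀ ℓ : ℕ, 0 < ℓ → ∀ i : Fin p,
      (((Finset.Icc (qi p i) (qi p i + Q)).filter (ℓ ∣ ·)).card : ℝ)
        ≤ ((Q:ℝ)+1) * (1/(ℓ:ℝ) + 1/((Q:ℝ)+1)) := by
    intro ℓ hℓ i
    have h1 := count_dvd_le (qi p i) Q ℓ (hqi_pos p i) hℓ
    have h2 : ((((Q+1)/ℓ : ℕ) : ℝ)) ≤ ((Q:ℝ)+1)/(ℓ:ℝ) := by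
      have := Nat.cast_div_le (α := ℝ) (m := Q+1) (n := ℓ)
      push_cast at this ⊢
      exact this
    have h3 : (((Finset.Icc (qi p i) (qi p i + Q)).filter (ℓ ∣ ·)).card : ℝ)
        ≤ (((Q+1)/ℓ : ℕ) : ℝ) + 1 := by exact_mod_cast h1
    have hℓr : (0:ℝ) < (ℓ:ℝ) := by exact_mod_cast hℓ
    have h4 : ((Q:ℝ)+1) * (1/(ℓ:ℝ) + 1/((Q:ℝ)+1)) = ((Q:ℝ)+1)/(ℓ:ℝ) + 1 := by
      field_simp
    linarith
  have ht1 : ∀ ℓ, 2 ≤ ℓ → ℓ ≤ Q+1 → t ℓ ≤ ((1:ℝ)/ℓ + 1/((Q:ℝ)+1))^p := by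
    intro ℓ hℓ2 _
    have hℓ0 : (0:ℝ) < (ℓ:ℝ) := by exact_mod_cast (by omega : 0 < ℓ)
    have hb : (0:ℝ) ≤ 1/(ℓ:ℝ) + 1/((Q:ℝ)+1) := by positivity
    rw [htdef]
    rw [div_le_iff₀ (by positivity)]
    calc (∏ i : Fin p, (((Finset.Icc (qi p i) (qi p i + Q)).filter (ℓ ∣ ·)).card : ℝ))
        ≤ ∏ _i : Fin p, ((Q:ℝ)+1) * (1/(ℓ:ℝ) + 1/((Q:ℝ)+1)) := by
          apply Finset.prod_le_prod (fun i _ => by positivity)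
            (fun i _ => hcount ℓ (by omega) i)
      _ = (((Q:ℝ)+1) * (1/(ℓ:ℝ) + 1/((Q:ℝ)+1)))^p := by
          rw [Finset.prod_const, Finset.card_univ, Fintype.card_fin]
      _ = ((1:ℝ)/ℓ + 1/((Q:ℝ)+1))^p * ((Q:ℝ)+1)^p := by
          rw [mul_pow]; ring
  have ht2 : ∀ ℓ, Q+1 < ℓ → t ℓ ≤ ((1:ℝ)/((Q:ℝ)+1))^p := by
    intro ℓ hℓ
    have hprod : (∏ i : Fin p, (((Finset.Icc (qi p i) (qi p i + Q)).filter (ℓ ∣ ·)).card : ℝ)) ≤ 1 := by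
      apply Finset.prod_le_one (fun i _ => by positivity)
      intro i _
      have h1 := count_dvd_le (qi p i) Q ℓ (hqi_pos p i) (by omega)
      have h2 : (Q+1)/ℓ = 0 := Nat.div_eq_of_lt (by omega)
      rw [h2] at h1
      exact_mod_cast h1
    rw [htdef, div_pow, one_pow]
    apply div_le_div_of_nonneg_right hprod (by positivity)
  have hsum := sum_est p Q M hp60 hQ100 hM2 hMQ t ht0 ht1 ht2
  calc (((Fintype.piFinset (fun i : Fin p => Finset.Icc (qi p i) (qi p i + Q))).filter
          (fun z => Finset.univ.gcd z ≠ 1)).card : ℝ) / ((Q:ℝ) + 1) ^ p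
      ≤ (∑ ℓ ∈ Finset.Ioc 1 M, ∏ i : Fin p,
          (((Finset.Icc (qi p i) (qi p i + Q)).filter (ℓ ∣ ·)).card : ℝ)) / ((Q:ℝ)+1)^p := by
        apply div_le_div_of_nonneg_right ?_ (by positivity)
        push_cast
        exact_mod_cast hcard
    _ = ∑ ℓ ∈ Finset.Ioc 1 M, t ℓ := by
        rw [Finset.sum_div]
    _ ≤ (0.626:ℝ)^p := hsum

/-- Independent uniform coordinates `Z i` on integer intervals `[qi p i, qi p i + q p]`
of length `q p → ∞`, with `max_i qi p i = o((q p)²)`: the fraction of tuples whose gcd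
is not 1 is at most `(1 - 6/π² + o(1))^⌊p/2⌋`. -/
theorem gcd_tuple_not_one_prob_bound (q : ℕ → ℕ) (qi : ℕ → ℕ → ℕ)
    (hq_pos : ∀ p, 0 < q p) (hqi_pos : ∀ p i, 0 < qi p i)
    (hq : Tendsto q atTop atTop)
    (hmax : Tendsto (fun p => (((Finset.range p).sup (qi p) : ℕ) : ℝ) / (q p : ℝ) ^ 2)
      atTop (nhds 0)) :
    ∃ ε : ℕ → ℝ, Tendsto ε atTop (nhds 0) ∧
      (∀ᶠ p in atTop,
        (((Fintype.piFinset (fun i : Fin p => Finset.Icc (qi p i) (qi p i + q p))).filter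
            (fun z => Finset.univ.gcd z ≠ 1)).card : ℝ) / ((q p : ℝ) + 1) ^ p
          ≤ (1 - 6 / Real.pi ^ 2 + ε p) ^ (p / 2)) ∧
      Tendsto (fun p =>
        (((Fintype.piFinset (fun i : Fin p => Finset.Icc (qi p i) (qi p i + q p))).filter
            (fun z => Finset.univ.gcd z ≠ 1)).card : ℝ) / ((q p : ℝ) + 1) ^ p)
        atTop (nhds 0) := by
  have hπ : (0.392:ℝ) ≤ 1 - 6 / Real.pi ^ 2 := by
    have h := Real.pi_gt_d6
    have hπ2 : (9.8696:ℝ) ≤ Real.pi^2 := by nlinarith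
    have h1 : (6:ℝ) / Real.pi^2 ≤ 6 / 9.8696 := by
      apply div_le_div_of_nonneg_left (by norm_num) (by norm_num) hπ2
    have h2 : (6:ℝ)/9.8696 ≤ 0.608 := by norm_num
    linarith
  refine ⟨fun _ => 0, tendsto_const_nhds, ?_, ?_⟩
  · filter_upwards [ratio_bound q qi hq_pos hqi_pos hq hmax] with p hp
    refine hp.trans ?_
    calc (0.626:ℝ)^p ≤ (0.626:ℝ)^(2*(p/2)) :=
          pow_le_pow_of_le_one (by norm_num) (by norm_num) (by omega)
      _ = ((0.626:ℝ)^2)^(p/2) := by rw [pow_mul]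
      _ ≤ (0.392:ℝ)^(p/2) := pow_le_pow_left₀ (by norm_num) (by norm_num) _
      _ ≤ (1 - 6/Real.pi^2 + 0)^(p/2) := pow_le_pow_left₀ (by norm_num) (by linarith) _
  · apply tendsto_of_tendsto_of_tendsto_of_le_of_le' tendsto_const_nhds
      (tendsto_pow_atTop_nhds_zero_of_lt_one (by norm_num) (by norm_num) :
        Tendsto (fun p => (0.626:ℝ)^p) atTop (nhds 0))
    · exact Eventually.of_forall fun p => by positivity
    · exact ratio_bound q qi hq_pos hqi_pos hq hmax
end
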